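/- Let N ≥ 1 be an integer, p ∈ (0,1), and let v be an integer with 0 ≤ v ≤ N and |v − Np| ≤ N·min(p, 1−p)/3. Then | log((v+1)(1−p)/((N−v+1)p)) − (v+1)/(Np) + (N−v+1)/(N(1−p)) | ≤ (1.95/3)·( (v + 1 − Np)/(Np) )² + (1.95/3)·( (N − v + 1 − N(1−p))/(N(1−p)) )². -/

import Mathlib

open Finset in
lemma log_taylor8 {x : ℝ} (h : |x| < 1) :
    |(x + x^2/2 + x^3/3 + x^4/4 + x^5/5 + x^6/6 + x^7/7 + x^8/8) + Real.log (1 - x)|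
      ≤ |x| ^ 9 / (1 - |x|) := by
  have := Real.abs_log_sub_add_sum_range_le h 8
  have hs : (∑ i ∈ range 8, x ^ (i + 1) / (i + 1))
      = x + x^2/2 + x^3/3 + x^4/4 + x^5/5 + x^6/6 + x^7/7 + x^8/8 := by
    simp [Finset.sum_range_succ]; ring
  rw [hs] at this
  simpa using this

lemma neg_side {t : ℝ} (ht0 : 0 ≤ t) (ht3 : t ≤ 1/3) :
    -t - Real.log (1 - t) ≤ 0.65 * t ^ 2 := by
  have habs : |t| < 1 := by rw [abs_of_nonneg ht0]; linarith
  have ht := log_taylor8 habs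
  rw [abs_of_nonneg ht0, abs_le] at ht
  have htail : t ^ 9 / (1 - t) ≤ (3/2) * t ^ 9 := by
    rw [div_le_iff₀ (by linarith)]
    nlinarith [mul_nonneg (pow_nonneg ht0 9) (by linarith : (0:ℝ) ≤ 1/3 - t)]
  have c3 : t^3 ≤ t^2 * (1/3) := by nlinarith [pow_nonneg ht0 2]
  have c4 : t^4 ≤ t^3 * (1/3) := by nlinarith [pow_nonneg ht0 3]
  have c5 : t^5 ≤ t^4 * (1/3) := by nlinarith [pow_nonneg ht0 4]
  have c6 : t^6 ≤ t^5 * (1/3) := by nlinarith [pow_nonneg ht0 5]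
  have c7 : t^7 ≤ t^6 * (1/3) := by nlinarith [pow_nonneg ht0 6]
  have c8 : t^8 ≤ t^7 * (1/3) := by nlinarith [pow_nonneg ht0 7]
  have c9 : t^9 ≤ t^8 * (1/3) := by nlinarith [pow_nonneg ht0 8]
  have := ht.1
  norm_num at this ⊢
  linarith

lemma pos_small {z : ℝ} (h0 : 0 ≤ z) (h7 : z ≤ 7/13) :
    z - Real.log (1 + z) ≤ 0.65 * z ^ 2 := by
  have habs : |(-z)| < 1 := by rw [abs_neg, abs_of_nonneg h0]; linarith
  have ht := log_taylor8 habs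
  have e1 : (1:ℝ) - -z = 1 + z := by ring
  have e2 : |(-z)| = z := by rw [abs_neg, abs_of_nonneg h0]
  rw [e2, e1, abs_le] at ht
  have htail : z ^ 9 / (1 - z) ≤ z ^ 2 * (10706059/376491102) := by
    rw [div_le_iff₀ (by linarith)]
    have h77 : z^7 ≤ (7/13)^7 := pow_le_pow_left₀ h0 h7 7
    nlinarith [mul_le_mul_of_nonneg_left h77 (pow_nonneg h0 2),
      mul_nonneg (pow_nonneg h0 2) (by linarith : (0:ℝ) ≤ 7/13 - z)]
  have c3 : z^4 ≤ z^3 * (7/13) := by nlinarith [pow_nonneg h0 3]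
  have c5 : z^6 ≤ z^5 * (7/13) := by nlinarith [pow_nonneg h0 5]
  have c7 : z^8 ≤ z^7 * (7/13) := by nlinarith [pow_nonneg h0 7]
  have p3 := pow_nonneg h0 3
  have p5 := pow_nonneg h0 5
  have p7 := pow_nonneg h0 7
  have := ht.1
  norm_num at this ⊢
  linarith

lemma key_log_bound {z : ℝ} (hz : -(1/3) ≤ z) :
    |Real.log (1 + z) - z| ≤ 0.65 * z ^ 2 := by
  have hpos : (0:ℝ) < 1 + z := by linarith
  have hle : Real.log (1 + z) ≤ z := by
    have := Real.log_le_sub_one_of_pos hpos; linarith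
  rw [abs_sub_comm, abs_of_nonneg (by linarith)]
  rcases le_or_gt z 0 with h0 | h0
  · have hz' : z = -(-z) := by ring
    have h := neg_side (t := -z) (by linarith) (by linarith)
    have e : (1:ℝ) - -z = 1 + z := by ring
    rw [e] at h
    nlinarith [h]
  · rcases le_or_gt z (7/13) with h7 | h7
    · exact pos_small h0.le h7
    · have hlog : 1 - (1 + z)⁻¹ ≤ Real.log (1 + z) :=
        Real.one_sub_inv_le_log_of_pos hpos
      have hinv : z - (1 - (1+z)⁻¹) = z^2 / (1+z) := by
        field_simp; ring
      have hq : z ^ 2 / (1 + z) ≤ 0.65 * z ^ 2 := by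
        rw [div_le_iff₀ hpos]
        nlinarith [sq_nonneg z]
      linarith

/-- deviation of the binomial log-likelihood-ratio term from its
linearization, for `v` within `N·min(p,1-p)/3` of the mean `Np`. -/
theorem binomial_loglikelihood_linearization_bound
    (N : ℕ) (hN : 1 ≤ N) (p : ℝ) (hp : 0 < p) (hp1 : p < 1)
    (v : ℕ) (hv : v ≤ N)
    (hconc : |(v : ℝ) - N * p| ≤ N * min p (1 - p) / 3) :
    |Real.log (((v : ℝ) + 1) * (1 - p) / (((N : ℝ) - v + 1) * p))
        - ((v : ℝ) + 1) / (N * p) + ((N : ℝ) - v + 1) / (N * (1 - p))|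
      ≤ (1.95 / 3) * (((v : ℝ) + 1 - N * p) / (N * p)) ^ 2
        + (1.95 / 3) * (((N : ℝ) - v + 1 - N * (1 - p)) / (N * (1 - p))) ^ 2 := by
  have hN1 : (1:ℝ) ≤ (N:ℝ) := by exact_mod_cast hN
  have hvN : (v:ℝ) ≤ (N:ℝ) := by exact_mod_cast hv
  have ha : (0:ℝ) < N * p := by positivity
  have hb : (0:ℝ) < N * (1 - p) := by
    have : (0:ℝ) < 1 - p := by linarith
    positivity
  set z1 : ℝ := ((v : ℝ) + 1 - N * p) / (N * p) with hz1def
  set z2 : ℝ := ((N : ℝ) - v + 1 - N * (1 - p)) / (N * (1 - p)) with hz2def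
  obtain ⟨hc1, hc2⟩ := abs_le.mp hconc
  have hmin1 : (N:ℝ) * min p (1-p) / 3 ≤ N * p / 3 := by
    have := min_le_left p (1-p)
    have : (N:ℝ) * min p (1-p) ≤ N * p := by nlinarith
    linarith
  have hmin2 : (N:ℝ) * min p (1-p) / 3 ≤ N * (1-p) / 3 := by
    have := min_le_right p (1-p)
    have : (N:ℝ) * min p (1-p) ≤ N * (1-p) := by nlinarith
    linarith
  have hz1 : -(1/3) ≤ z1 := by
    rw [hz1def, le_div_iff₀ ha]
    nlinarith
  have hz2 : -(1/3) ≤ z2 := by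
    rw [hz2def, le_div_iff₀ hb]
    nlinarith
  have e1 : ((v : ℝ) + 1) / (N * p) = 1 + z1 := by
    rw [hz1def]; field_simp; ring
  have e2 : ((N : ℝ) - v + 1) / (N * (1 - p)) = 1 + z2 := by
    rw [hz2def]; rw [eq_comm, add_div' _ _ _ hb.ne']; congr 1; ring
  have hp1z1 : (0:ℝ) < 1 + z1 := by linarith
  have hp1z2 : (0:ℝ) < 1 + z2 := by linarith
  have hlog : Real.log (((v : ℝ) + 1) * (1 - p) / (((N : ℝ) - v + 1) * p))
      = Real.log (1 + z1) - Real.log (1 + z2) := by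
    have hNv : (0:ℝ) < (N:ℝ) - v + 1 := by linarith
    rw [← e1, ← e2, ← Real.log_div (ne_of_gt (by rw [e1]; exact hp1z1))
      (ne_of_gt (by rw [e2]; exact hp1z2))]
    congr 1
    rw [div_div_div_eq]
    rw [div_eq_div_iff (by positivity) (by positivity)]
    ring
  have k1 := key_log_bound hz1
  have k2 := key_log_bound hz2
  have hsum : Real.log (((v : ℝ) + 1) * (1 - p) / (((N : ℝ) - v + 1) * p))
        - ((v : ℝ) + 1) / (N * p) + ((N : ℝ) - v + 1) / (N * (1 - p))
      = (Real.log (1 + z1) - z1) - (Real.log (1 + z2) - z2) := by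
    rw [hlog, e1, e2]; ring
  rw [hsum]
  calc |(Real.log (1 + z1) - z1) - (Real.log (1 + z2) - z2)|
      ≤ |Real.log (1 + z1) - z1| + |Real.log (1 + z2) - z2| := abs_sub _ _
    _ ≤ 0.65 * z1 ^ 2 + 0.65 * z2 ^ 2 := add_le_add k1 k2
    _ = (1.95 / 3) * z1 ^ 2 + (1.95 / 3) * z2 ^ 2 := by norm_num
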